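/- Let p be a prime, k an F-finite field of characteristic p, A = k[x_1,...,x_d] a polynomial ring, 𝔪 = (x_1,...,x_d), and f ∈ 𝔪 a nonzero polynomial. For an integer e > 0 define ν_f(p^e) := sup{n ≥ 0 : f^n ∉ 𝔪^[p^e]}, where 𝔪^[p^e] = (x_1^{p^e},...,x_d^{p^e}). Then for all e, e' > 0, ν_f(p^{e+e'}) ≥ p^{e'}·ν_f(p^e), i.e., the sequence ν_f(p^e)/p^e is non-decreasing in e. -/
import Mathlib


open MvPolynomial

/-- Membership criterion for the Frobenius power ideal `(x_1^q, ..., x_d^q)`: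
a polynomial lies in it iff every monomial in its support has some exponent `≥ q`. -/
lemma mem_frobPow_iff {σ : Type} {k : Type} [CommSemiring k] (q : ℕ)
    (g : MvPolynomial σ k) :
    g ∈ Ideal.span (Set.range fun i : σ => (X i : MvPolynomial σ k) ^ q) ↔
      ∀ m ∈ g.support, ∃ i, q ≤ m i := by
  have hset : (Set.range fun i : σ => (X i : MvPolynomial σ k) ^ q) =
      (fun s => monomial s (1 : k)) '' (Set.range fun i : σ => Finsupp.single i q) := by
    rw [← Set.range_comp]
    refine congrArg Set.range (funext fun i => ?_)
    simp [Function.comp, X_pow_eq_monomial]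
  rw [hset, mem_ideal_span_monomial_image]
  constructor
  · intro h m hm
    obtain ⟨si, ⟨i, rfl⟩, hle⟩ := h m hm
    exact ⟨i, by simpa using (Finsupp.single_le_iff).mp hle⟩
  · intro h m hm
    obtain ⟨i, hi⟩ := h m hm
    exact ⟨Finsupp.single i q, ⟨i, rfl⟩, (Finsupp.single_le_iff).mpr hi⟩

/-- If `a` lies in the span of `s`, then some power of `a` lies in the span of
`(q+1)`-th powers of elements of `s`. -/
lemma exists_pow_mem_span_pow {α : Type} [CommRing α] {s : Set α} {a : α}
    (ha : a ∈ Ideal.span s) (q : ℕ) :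
    ∃ N, a ^ N ∈ Ideal.span ((fun x => x ^ (q + 1)) '' s) := by
  rw [Ideal.span, Finsupp.mem_span_iff_linearCombination] at ha
  obtain ⟨c, hc⟩ := ha
  have hsum : (c.support.sum fun i => c i * (i : α)) = a := hc
  refine ⟨c.support.card * q + 1, ?_⟩
  have hmem := Ideal.sum_pow_mem_span_pow c.support (fun i => c i * (i : α)) q
  rw [hsum] at hmem
  refine Ideal.span_le.mpr ?_ hmem
  rintro _ ⟨i, _, rfl⟩
  show (c i * (i : α)) ^ (q + 1) ∈ _
  rw [mul_pow]
  exact Ideal.mul_mem_left _ _ (Ideal.subset_span ⟨(i : α), i.2, rfl⟩)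

/-- In characteristic `p`, if `m` is in the support of `g`, then `p^n • m` is in the
support of `g ^ p ^ n`. -/
lemma smul_mem_support_pow_char_pow {σ : Type} (p : ℕ) [Fact p.Prime] {k : Type}
    [Field k] [CharP k p] (g : MvPolynomial σ k) (n : ℕ) {m : σ →₀ ℕ}
    (hm : m ∈ g.support) : (p ^ n) • m ∈ (g ^ p ^ n).support := by
  classical
  have hp : 0 < p ^ n := pow_pos (Fact.out : p.Prime).pos n
  rw [mem_support_iff]
  conv_lhs => rw [g.as_sum, sum_pow_char_pow]
  simp_rw [monomial_pow]
  rw [coeff_sum, Finset.sum_eq_single m]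
  · rw [coeff_monomial, if_pos rfl]
    exact pow_ne_zero _ (mem_support_iff.mp hm)
  · intro b _ hbm
    rw [coeff_monomial, if_neg]
    intro hEq
    refine hbm (Finsupp.ext fun i => ?_)
    have := DFunLike.congr_fun hEq i
    simp only [Finsupp.smul_apply, smul_eq_mul] at this
    exact Nat.eq_of_mul_eq_mul_left hp this
  · intro h
    exact absurd hm h

/-- For `ν_f(p^e) := max{n : f^n ∉ 𝔪^[p^e]}` in a polynomial ring over an F-finite field
of characteristic `p`, one has `ν_f(p^{e+e'}) ≥ p^{e'} ν_f(p^e)`, i.e. `ν_f(p^e)/p^e` is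
non-decreasing in `e`. -/
theorem nu_monotone (p : ℕ) [Fact p.Prime] (k : Type) [Field k] [CharP k p]
    (hFfin : RingHom.Finite (frobenius k p)) (d : ℕ) (f : MvPolynomial (Fin d) k)
    (hf0 : f ≠ 0)
    (hfm : f ∈ Ideal.span (Set.range (X : Fin d → MvPolynomial (Fin d) k)))
    (e e' : ℕ) (he : 0 < e) (he' : 0 < e') :
    p ^ e' * sSup {n : ℕ |
        f ^ n ∉ Ideal.span (Set.range fun i : Fin d =>
          (X i : MvPolynomial (Fin d) k) ^ p ^ e)} ≤
      sSup {n : ℕ |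
        f ^ n ∉ Ideal.span (Set.range fun i : Fin d =>
          (X i : MvPolynomial (Fin d) k) ^ p ^ (e + e'))} := by
  have hpprime : p.Prime := Fact.out
  -- The sets involved
  set S : Set ℕ := {n : ℕ |
      f ^ n ∉ Ideal.span (Set.range fun i : Fin d =>
        (X i : MvPolynomial (Fin d) k) ^ p ^ e)} with hS
  set T : Set ℕ := {n : ℕ |
      f ^ n ∉ Ideal.span (Set.range fun i : Fin d =>
        (X i : MvPolynomial (Fin d) k) ^ p ^ (e + e'))} with hT
  -- Boundedness of a set of this shape, for any exponent `q = p^ε > 0`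
  have bdd : ∀ ε : ℕ, BddAbove {n : ℕ |
      f ^ n ∉ Ideal.span (Set.range fun i : Fin d =>
        (X i : MvPolynomial (Fin d) k) ^ p ^ ε)} := by
    intro ε
    obtain ⟨N, hN⟩ := exists_pow_mem_span_pow hfm (p ^ ε - 1)
    have hq : p ^ ε - 1 + 1 = p ^ ε := Nat.succ_pred_eq_of_pos (pow_pos hpprime.pos ε)
    rw [hq] at hN
    have himg : ((fun x => x ^ p ^ ε) '' Set.range (X : Fin d → MvPolynomial (Fin d) k)) =
        Set.range fun i : Fin d => (X i : MvPolynomial (Fin d) k) ^ p ^ ε := by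
      rw [← Set.range_comp]; rfl
    rw [himg] at hN
    refine ⟨N, fun n hn => ?_⟩
    by_contra hlt
    push_neg at hlt
    refine hn ?_
    have : f ^ n = f ^ (n - N) * f ^ N := by
      rw [← pow_add, Nat.sub_add_cancel (le_of_lt hlt)]
    rw [this]
    exact Ideal.mul_mem_left _ _ hN
  -- `0 ∈ S` since `1` is not in the proper monomial ideal
  have hne : (0 : ℕ) ∈ S := by
    rw [hS, Set.mem_setOf_eq, pow_zero]
    intro h1
    rw [mem_frobPow_iff] at h1
    have h0 : (0 : Fin d →₀ ℕ) ∈ (1 : MvPolynomial (Fin d) k).support := by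
      rw [mem_support_iff]
      simp
    obtain ⟨i, hi⟩ := h1 0 h0
    simp only [Finsupp.coe_zero, Pi.zero_apply, Nat.le_zero] at hi
    have := pow_pos hpprime.pos e
    omega
  -- the sup of S is attained
  have hmem : sSup S ∈ S := Nat.sSup_mem ⟨0, hne⟩ (bdd e)
  set n₀ := sSup S with hn₀
  -- key step: `p^{e'} * n₀ ∈ T`
  have hkey : p ^ e' * n₀ ∈ T := by
    rw [hS, Set.mem_setOf_eq, mem_frobPow_iff] at hmem
    push_neg at hmem
    obtain ⟨m, hmsupp, hmlt⟩ := hmem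
    rw [hT, Set.mem_setOf_eq]
    intro habs
    rw [mem_frobPow_iff] at habs
    have hpow : f ^ (p ^ e' * n₀) = (f ^ n₀) ^ p ^ e' := by
      rw [← pow_mul, mul_comm]
    have hsupp : (p ^ e') • m ∈ (f ^ (p ^ e' * n₀)).support := by
      rw [hpow]
      exact smul_mem_support_pow_char_pow p (f ^ n₀) e' hmsupp
    obtain ⟨i, hi⟩ := habs _ hsupp
    have h1 : ((p ^ e') • m) i = p ^ e' * m i := rfl
    rw [h1, pow_add] at hi
    have h2 : p ^ e' * m i < p ^ e' * p ^ e :=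
      (Nat.mul_lt_mul_left (pow_pos hpprime.pos e')).mpr (hmlt i)
    rw [mul_comm (p^e) (p^e')] at hi
    exact absurd hi (not_le_of_gt h2)
  exact le_csSup (bdd (e + e')) hkey
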